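/- arXiv:1304.5434 — 4 statements merged into one kernel-verified Lean document; each statement's English description precedes it below -/
import Mathlib

section
/- Let M be a differential module over ℂ(z) carrying a nondegenerate bilinear form ⟨·,·⟩ compatible with the derivation (i.e. d/dz ⟨m₁,m₂⟩ = ⟨∂m₁,m₂⟩ + ⟨m₁,∂m₂⟩), and let e ∈ M be a cyclic vector with ⟨e, ∂^i e⟩ = 0 for 0 ≤ i ≤ n−1 and ⟨e, ∂^n e⟩ = α ≠ 0, where rank M = n+1. Then the form is (−1)^n-symmetric: ⟨x, y⟩ = (−1)^n ⟨y, x⟩ for all x, y ∈ M. -/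
/-- Let `M` be a differential module over `ℂ(z)` (with the derivation `d/dz`,
pinned down by `D X = 1` and `D c = 0` for constants), carrying a nondegenerate
bilinear form `B` compatible with the derivation, and let `e` be a cyclic vector such
that `e, ∂e, …, ∂ⁿe` is a basis, `⟨e, ∂^i e⟩ = 0` for `0 ≤ i ≤ n−1`, and
`⟨e, ∂^n e⟩ = α ≠ 0`.  Then the form is `(−1)ⁿ`-symmetric. -/
theorem selfdual_pairing_symmetric
    (n : ℕ) (M : Type*) [AddCommGroup M] [Module (RatFunc ℂ) M]
    (D : RatFunc ℂ → RatFunc ℂ)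
    (hDadd : ∀ x y, D (x + y) = D x + D y)
    (hDmul : ∀ x y, D (x * y) = x * D y + D x * y)
    (hDX : D RatFunc.X = 1)
    (hDC : ∀ c : ℂ, D (RatFunc.C c) = 0)
    (dM : M → M)
    (hdMadd : ∀ x y : M, dM (x + y) = dM x + dM y)
    (hdMleib : ∀ (f : RatFunc ℂ) (m : M), dM (f • m) = f • dM m + D f • m)
    (B : M →ₗ[RatFunc ℂ] M →ₗ[RatFunc ℂ] RatFunc ℂ)
    (hBnondeg : ∀ x : M, (∀ y : M, B x y = 0) → x = 0)
    (hBcompat : ∀ m₁ m₂ : M, D (B m₁ m₂) = B (dM m₁) m₂ + B m₁ (dM m₂))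
    (e : M) (b : Module.Basis (Fin (n + 1)) (RatFunc ℂ) M)
    (hb : ∀ i : Fin (n + 1), b i = dM^[(i : ℕ)] e)
    (hvanish : ∀ i : ℕ, i < n → B e (dM^[i] e) = 0)
    (hα : B e (dM^[n] e) ≠ 0) :
    ∀ x y : M, B x y = (-1 : RatFunc ℂ) ^ n * B y x := by
  -- basic derivation facts
  have hD0 : D 0 = 0 := by
    have h := hDadd 0 0
    rw [add_zero] at h
    exact (left_eq_add.mp h)
  have hsC : ((-1 : RatFunc ℂ)) ^ n = RatFunc.C ((-1 : ℂ) ^ n) := by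
    rw [map_pow, map_neg, map_one]
  have hDs : ∀ x, D ((-1 : RatFunc ℂ) ^ n * x) = (-1 : RatFunc ℂ) ^ n * D x := by
    intro x
    rw [hsC, hDmul, hDC, zero_mul, add_zero]
  -- Step A : for i+j ≤ n, B (∂^i e) (∂^j e) = (-1)^i * B e (∂^(i+j) e)
  have hA : ∀ i j : ℕ, i + j ≤ n →
      B (dM^[i] e) (dM^[j] e) = (-1 : RatFunc ℂ) ^ i * B e (dM^[i + j] e) := by
    intro i
    induction i with
    | zero => intro j _; simp
    | succ i ih =>
      intro j hij
      have h1 : B (dM^[i] e) (dM^[j] e) = 0 := by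
        rw [ih j (by omega), hvanish (i + j) (by omega), mul_zero]
      have h2 := hBcompat (dM^[i] e) (dM^[j] e)
      rw [h1, hD0] at h2
      have e1 : dM^[i + 1] e = dM (dM^[i] e) := Function.iterate_succ_apply' dM i e
      have e2 : dM^[j + 1] e = dM (dM^[j] e) := Function.iterate_succ_apply' dM j e
      have h3 : B (dM^[i] e) (dM^[j + 1] e)
          = (-1 : RatFunc ℂ) ^ i * B e (dM^[i + (j + 1)] e) := ih (j + 1) (by omega)
      rw [e2] at h3
      have e3 : i + 1 + j = i + (j + 1) := by omega
      rw [e1, e3]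
      have : B (dM (dM^[i] e)) (dM^[j] e) = - B (dM^[i] e) (dM (dM^[j] e)) := by
        linear_combination -h2
      rw [this, h3]
      ring
  -- Step B : C(e, ∂^j e) = 0 for j ≤ n
  have hone : ((-1 : RatFunc ℂ)) ^ n * (-1 : RatFunc ℂ) ^ n = 1 := by
    rw [← pow_add, Even.neg_one_pow ⟨n, rfl⟩]
  have hB0 : ∀ j : ℕ, j ≤ n →
      B e (dM^[j] e) = (-1 : RatFunc ℂ) ^ n * B (dM^[j] e) e := by
    intro j hj
    have hAj : B (dM^[j] e) (dM^[0] e) = (-1 : RatFunc ℂ) ^ j * B e (dM^[j + 0] e) :=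
      hA j 0 (by omega)
    simp only [Function.iterate_zero_apply, Nat.add_zero] at hAj
    rcases lt_or_eq_of_le hj with h | h
    · rw [hvanish j h, hAj, hvanish j h]
      ring
    · subst h
      rw [hAj]
      calc B e (dM^[j] e) = ((-1 : RatFunc ℂ) ^ j * (-1 : RatFunc ℂ) ^ j) * B e (dM^[j] e) := by
            rw [hone, one_mul]
        _ = (-1 : RatFunc ℂ) ^ j * ((-1 : RatFunc ℂ) ^ j * B e (dM^[j] e)) := by ring
  -- The difference form
  set Clin : M →ₗ[RatFunc ℂ] M →ₗ[RatFunc ℂ] RatFunc ℂ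
      := B - ((-1 : RatFunc ℂ) ^ n) • B.flip with hClin
  have hCval : ∀ x y : M, Clin x y = B x y - (-1 : RatFunc ℂ) ^ n * B y x := by
    intro x y
    simp [hClin, LinearMap.sub_apply, LinearMap.smul_apply, LinearMap.flip_apply,
      smul_eq_mul]
  have hCcompat : ∀ m₁ m₂ : M,
      D (Clin m₁ m₂) = Clin (dM m₁) m₂ + Clin m₁ (dM m₂) := by
    intro m₁ m₂
    have hsub : D (B m₁ m₂ - (-1 : RatFunc ℂ) ^ n * B m₂ m₁)
        = D (B m₁ m₂) - (-1 : RatFunc ℂ) ^ n * D (B m₂ m₁) := by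
      have h := hDadd (B m₁ m₂ - (-1 : RatFunc ℂ) ^ n * B m₂ m₁)
        ((-1 : RatFunc ℂ) ^ n * B m₂ m₁)
      rw [sub_add_cancel, hDs] at h
      linear_combination -h
    rw [hCval, hCval, hCval, hsub, hBcompat m₁ m₂, hBcompat m₂ m₁]
    ring
  -- left kernel propagation
  have hCzero : ∀ i : ℕ, ∀ y : M, Clin (dM^[i] e) y = 0 := by
    intro i
    induction i with
    | zero =>
      have h0 : Clin e = 0 := by
        apply b.ext
        intro j
        rw [hb j, LinearMap.zero_apply, hCval, hB0 j (by omega)]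
        ring
      intro y
      rw [Function.iterate_zero_apply, h0, LinearMap.zero_apply]
    | succ i ih =>
      have h0 : Clin (dM^[i + 1] e) = 0 := by
        apply b.ext
        intro j
        rw [hb j, LinearMap.zero_apply]
        have h := hCcompat (dM^[i] e) (dM^[(j : ℕ)] e)
        rw [ih, hD0, ih] at h
        rw [Function.iterate_succ_apply']
        linear_combination -h
      intro y
      rw [h0, LinearMap.zero_apply]
  -- conclude
  intro x y
  have hflip : Clin.flip y = 0 := by
    apply b.ext
    intro i
    rw [hb i, LinearMap.zero_apply, LinearMap.flip_apply]
    exact hCzero i y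
  have hxy : Clin x y = 0 := by
    have := congrArg (fun f => f x) hflip
    simpa [LinearMap.flip_apply] using this
  rw [hCval] at hxy
  linear_combination hxy
end

section
/- Let y_k = Σ_{j=0}^k (1/j!) ln(z)^j f_{k−j}, 0 ≤ k ≤ n, be a flag of solutions with f_0 ∈ ℚ⟦z⟧*, f_0(0)=1, f_i ∈ ℚ⟦z⟧. Define N_0 := 1 and N_{k+1} := ϑ ∘ (1/N_k(y_k)) ∘ N_k. Then for all 0 ≤ j ≤ n+1: N_j ∈ ℚ⟦z⟧[ϑ], N_j(y_i) = 0 for 0 ≤ i ≤ j−1, and for k ≤ n, N_k(y_k) is a unit power series with constant term 1. -/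
open Polynomial

/-- The Euler operator `ϑ = z d/dz` on `ℚ⟦z⟧`. -/
noncomputable def thetaPS (g : PowerSeries ℚ) : PowerSeries ℚ :=
  PowerSeries.mk fun m => (m : ℚ) * PowerSeries.coeff m g

/-- The Euler operator `ϑ = z d/dz` on `ℚ⟦z⟧[ln z]` (modelled as polynomials in
`X = ln z` over `ℚ⟦z⟧`), acting by `ϑ(g · (ln z)^j) = ϑ(g) (ln z)^j + j g (ln z)^{j-1}`. -/
noncomputable def thetaL (p : Polynomial (PowerSeries ℚ)) : Polynomial (PowerSeries ℚ) :=
  ∑ j ∈ Finset.range (p.natDegree + 1),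
    (Polynomial.C (thetaPS (p.coeff j)) * Polynomial.X ^ j +
      Polynomial.C ((j : ℚ) • p.coeff j) * Polynomial.X ^ (j - 1))

/-- The flag `y_k = Σ_{j=0}^k (1/j!) (ln z)^j f_{k−j}` in `ℚ⟦z⟧[ln z]`. -/
noncomputable def flag (f : ℕ → PowerSeries ℚ) (k : ℕ) : Polynomial (PowerSeries ℚ) :=
  ∑ j ∈ Finset.range (k + 1),
    ((j.factorial : ℚ)⁻¹) • (Polynomial.C (f (k - j)) * Polynomial.X ^ j)

/-- The operators of the local normal form: `N_0 = 1` and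
`N_{k+1} = ϑ ∘ (1/N_k(y_k)) ∘ N_k`. -/
noncomputable def Nop (f : ℕ → PowerSeries ℚ) :
    ℕ → Polynomial (PowerSeries ℚ) → Polynomial (PowerSeries ℚ)
  | 0 => id
  | k + 1 => fun p =>
      thetaL (Polynomial.C (((Nop f k (flag f k)).coeff 0)⁻¹) * Nop f k p)


lemma thetaPS_coeff (g : PowerSeries ℚ) (m : ℕ) :
    PowerSeries.coeff m (thetaPS g) = (m : ℚ) * PowerSeries.coeff m g := by
  simp [thetaPS]

lemma thetaPS_zero : thetaPS 0 = 0 := by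
  ext m; simp [thetaPS_coeff]

lemma thetaPS_one : thetaPS 1 = 0 := by
  ext m
  rw [thetaPS_coeff]
  simp [PowerSeries.coeff_one]

lemma thetaPS_add (a b : PowerSeries ℚ) : thetaPS (a + b) = thetaPS a + thetaPS b := by
  ext m; simp [thetaPS_coeff]; ring

lemma thetaPS_smul (c : ℚ) (a : PowerSeries ℚ) : thetaPS (c • a) = c • thetaPS a := by
  ext m; simp [thetaPS_coeff]; ring

lemma thetaPS_mul (a b : PowerSeries ℚ) :
    thetaPS (a * b) = thetaPS a * b + a * thetaPS b := by
  ext m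
  rw [map_add, thetaPS_coeff, PowerSeries.coeff_mul, PowerSeries.coeff_mul,
    PowerSeries.coeff_mul, Finset.mul_sum, ← Finset.sum_add_distrib]
  apply Finset.sum_congr rfl
  intro x hx
  rw [Finset.HasAntidiagonal.mem_antidiagonal] at hx
  simp only [thetaPS_coeff]
  rw [← hx]
  push_cast
  ring

lemma constantCoeff_thetaPS (g : PowerSeries ℚ) :
    PowerSeries.constantCoeff (thetaPS g) = 0 := by
  rw [← PowerSeries.coeff_zero_eq_constantCoeff_apply, thetaPS_coeff]; simp

lemma thetaL_coeff (p : Polynomial (PowerSeries ℚ)) (m : ℕ) :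
    (thetaL p).coeff m = thetaPS (p.coeff m) + ((m + 1 : ℕ) : ℚ) • p.coeff (m + 1) := by
  unfold thetaL
  rw [Polynomial.finset_sum_coeff]
  simp only [Polynomial.coeff_add, Polynomial.coeff_C_mul, Polynomial.coeff_X_pow,
    mul_ite, mul_one, mul_zero]
  rw [Finset.sum_add_distrib]
  congr 1
  · rw [Finset.sum_ite_eq (Finset.range (p.natDegree + 1))]
    by_cases h : m ∈ Finset.range (p.natDegree + 1)
    · simp [h]
    · rw [if_neg h]
      rw [Finset.mem_range, not_lt] at h
      rw [Polynomial.coeff_eq_zero_of_natDegree_lt (by omega), thetaPS_zero]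
  · rw [Finset.sum_range_succ']
    simp only [Nat.cast_zero, zero_smul, Nat.add_sub_cancel, CharP.cast_eq_zero, zero_mul,
      add_zero, Nat.zero_sub, if_pos, ite_smul, zero_smul]
    have : ∀ j ∈ Finset.range p.natDegree,
        (if m = j then ((j+1 : ℕ) : ℚ) • p.coeff (j + 1) else 0) =
        (if m = j then ((m+1 : ℕ) : ℚ) • p.coeff (m + 1) else 0) := by
      intro j _
      by_cases h : m = j
      · subst h; simp
      · simp [h]
    rw [Finset.sum_congr rfl this, Finset.sum_ite_eq (Finset.range p.natDegree)]
    by_cases h : m ∈ Finset.range p.natDegree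
    · simp [h]
    · rw [if_neg h]
      rw [Finset.mem_range, not_lt] at h
      rw [Polynomial.coeff_eq_zero_of_natDegree_lt (by omega), smul_zero]
      simp

lemma thetaL_add (p q : Polynomial (PowerSeries ℚ)) :
    thetaL (p + q) = thetaL p + thetaL q := by
  ext m
  simp [thetaL_coeff, thetaPS_add, smul_add]
  abel

lemma thetaL_zero : thetaL 0 = 0 := by
  ext m; simp [thetaL_coeff, thetaPS_zero]

noncomputable def thetaLAdd : Polynomial (PowerSeries ℚ) →+ Polynomial (PowerSeries ℚ) :=
  { toFun := thetaL, map_zero' := thetaL_zero, map_add' := thetaL_add }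

lemma thetaL_sum {ι : Type*} (s : Finset ι) (g : ι → Polynomial (PowerSeries ℚ)) :
    thetaL (∑ i ∈ s, g i) = ∑ i ∈ s, thetaL (g i) :=
  map_sum thetaLAdd g s

lemma thetaL_C_mul (a : PowerSeries ℚ) (q : Polynomial (PowerSeries ℚ)) :
    thetaL (Polynomial.C a * q) = Polynomial.C (thetaPS a) * q + Polynomial.C a * thetaL q := by
  ext m
  simp only [thetaL_coeff, Polynomial.coeff_add, Polynomial.coeff_C_mul, thetaPS_mul,
    mul_add, mul_smul_comm]
  abel

lemma thetaL_C (a : PowerSeries ℚ) : thetaL (Polynomial.C a) = Polynomial.C (thetaPS a) := by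
  ext m
  rw [thetaL_coeff]
  rcases Nat.eq_zero_or_pos m with h | h
  · subst h; simp [Polynomial.coeff_C, thetaPS_zero]
  · simp [Polynomial.coeff_C, Nat.pos_iff_ne_zero.mp h, thetaPS_zero]

lemma flag_coeff (h : ℕ → PowerSeries ℚ) (m ℓ : ℕ) :
    (flag h m).coeff ℓ =
      if ℓ < m + 1 then ((ℓ.factorial : ℚ)⁻¹) • h (m - ℓ) else 0 := by
  unfold flag
  rw [Polynomial.finset_sum_coeff]
  simp only [Polynomial.coeff_smul, Polynomial.coeff_C_mul, Polynomial.coeff_X_pow,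
    mul_ite, mul_one, mul_zero, smul_ite, smul_zero]
  have : ∀ j ∈ Finset.range (m + 1),
      (if ℓ = j then (j.factorial : ℚ)⁻¹ • h (m - j) else 0) =
      (if ℓ = j then (ℓ.factorial : ℚ)⁻¹ • h (m - ℓ) else 0) := by
    intro j _
    by_cases hj : ℓ = j
    · subst hj; rfl
    · simp [hj]
  rw [Finset.sum_congr rfl this, Finset.sum_ite_eq (Finset.range (m + 1))]
  simp [Finset.mem_range]

lemma flag_zero' (h : ℕ → PowerSeries ℚ) : flag h 0 = Polynomial.C (h 0) := by
  unfold flag; simp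

lemma fact_scalar (ℓ : ℕ) :
    ((ℓ + 1 : ℕ) : ℚ) * (((ℓ + 1).factorial : ℚ)⁻¹) = ((ℓ.factorial : ℚ)⁻¹) := by
  rw [Nat.factorial_succ]
  have h1 : ((ℓ + 1 : ℕ) : ℚ) ≠ 0 := by positivity
  have h2 : ((ℓ.factorial : ℕ) : ℚ) ≠ 0 := by
    exact_mod_cast Nat.cast_ne_zero.mpr ℓ.factorial_ne_zero
  push_cast
  field_simp

lemma main_flag (f : ℕ → PowerSeries ℚ)
    (hf0 : PowerSeries.constantCoeff (f 0) = 1) (k : ℕ) :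
    ∃ h : ℕ → PowerSeries ℚ,
      PowerSeries.constantCoeff (h 0) = 1 ∧
      (∀ m, Nop f k (flag f (k + m)) = flag h m) ∧
      (∀ i < k, Nop f k (flag f i) = 0) := by
  induction k with
  | zero =>
    exact ⟨f, hf0, fun m => by simp [Nop], fun i hi => absurd hi (Nat.not_lt_zero i)⟩
  | succ k ih =>
    obtain ⟨h, h0, hm, hlt⟩ := ih
    have hu : PowerSeries.constantCoeff (h 0) ≠ 0 := by rw [h0]; exact one_ne_zero
    have huu : (h 0)⁻¹ * h 0 = 1 := PowerSeries.inv_mul_cancel _ hu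
    have hNk : Nop f k (flag f k) = Polynomial.C (h 0) := by
      have := hm 0
      rw [Nat.add_zero] at this
      rw [this, flag_zero']
    have hcoeff : ((Nop f k (flag f k)).coeff 0) = h 0 := by
      rw [hNk, Polynomial.coeff_C_zero]
    refine ⟨fun s => thetaPS ((h 0)⁻¹ * h (s + 1)) + (h 0)⁻¹ * h s, ?_, ?_, ?_⟩
    · rw [map_add, constantCoeff_thetaPS, zero_add, huu, map_one]
    · intro m
      show thetaL (Polynomial.C (((Nop f k (flag f k)).coeff 0)⁻¹) *
        Nop f k (flag f (k + 1 + m))) = _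
      rw [hcoeff, show k + 1 + m = k + (m + 1) by omega, hm (m + 1)]
      ext ℓ
      rw [thetaL_coeff, Polynomial.coeff_C_mul, Polynomial.coeff_C_mul,
        flag_coeff, flag_coeff, flag_coeff]
      rcases lt_trichotomy ℓ (m + 1) with hℓ | hℓ | hℓ
      · rw [if_pos hℓ, if_pos (by omega), if_pos (by omega),
          show m + 1 - ℓ = (m - ℓ) + 1 by omega, show m + 1 - (ℓ + 1) = m - ℓ by omega]
        rw [mul_smul_comm, thetaPS_smul, mul_smul_comm, smul_smul, fact_scalar, smul_add]
      · subst hℓ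
        rw [if_pos (by omega), if_neg (by omega), if_neg (by omega),
          Nat.sub_self, mul_smul_comm, thetaPS_smul, huu, thetaPS_one,
          smul_zero, mul_zero, smul_zero, add_zero]
      · rw [if_neg (by omega), if_neg (by omega), if_neg (by omega)]
        simp [thetaPS_zero]
    · intro i hi
      show thetaL (Polynomial.C (((Nop f k (flag f k)).coeff 0)⁻¹) * Nop f k (flag f i)) = 0
      rcases Nat.lt_or_ge i k with hik | hik
      · rw [hlt i hik, mul_zero, thetaL_zero]
      · have : i = k := by omega
        subst this
        rw [hcoeff, hNk, ← Polynomial.C_mul, huu, thetaL_C, thetaPS_one, map_zero]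

lemma Nop_form (f : ℕ → PowerSeries ℚ) (j : ℕ) :
    ∃ b : ℕ → PowerSeries ℚ, ∀ p,
      Nop f j p = ∑ i ∈ Finset.range (j + 1), Polynomial.C (b i) * thetaL^[i] p := by
  induction j with
  | zero => exact ⟨fun _ => 1, fun p => by simp [Nop]⟩
  | succ j ih =>
    obtain ⟨b, hb⟩ := ih
    set u : PowerSeries ℚ := ((Nop f j (flag f j)).coeff 0)⁻¹ with hu
    refine ⟨fun i => (if i ≤ j then thetaPS (u * b i) else 0) +
      (if 1 ≤ i then u * b (i - 1) else 0), fun p => ?_⟩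
    show thetaL (Polynomial.C u * Nop f j p) = _
    rw [hb, Finset.mul_sum,
      Finset.sum_congr rfl (fun i _ => by
        rw [← mul_assoc, ← Polynomial.C_mul] :
        ∀ i ∈ Finset.range (j + 1), Polynomial.C u * (Polynomial.C (b i) * thetaL^[i] p)
          = Polynomial.C (u * b i) * thetaL^[i] p),
      thetaL_sum,
      Finset.sum_congr rfl (fun i _ => by
        rw [thetaL_C_mul, Function.iterate_succ_apply'] :
        ∀ i ∈ Finset.range (j + 1), thetaL (Polynomial.C (u * b i) * thetaL^[i] p)
          = Polynomial.C (thetaPS (u * b i)) * thetaL^[i] p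
            + Polynomial.C (u * b i) * thetaL^[i + 1] p),
      Finset.sum_add_distrib]
    conv_rhs =>
      rw [Finset.sum_congr rfl (fun i _ => by rw [map_add, add_mul] :
        ∀ i ∈ Finset.range (j + 2),
          Polynomial.C ((if i ≤ j then thetaPS (u * b i) else 0) +
            (if 1 ≤ i then u * b (i - 1) else 0)) * thetaL^[i] p
          = Polynomial.C (if i ≤ j then thetaPS (u * b i) else 0) * thetaL^[i] p
            + Polynomial.C (if 1 ≤ i then u * b (i - 1) else 0) * thetaL^[i] p),
        Finset.sum_add_distrib]
    congr 1
    · conv_rhs => rw [Finset.sum_range_succ]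
      rw [if_neg (by omega : ¬ (j + 1 ≤ j)), map_zero, zero_mul, add_zero]
      refine Finset.sum_congr rfl fun i hi => ?_
      rw [if_pos (Nat.lt_succ_iff.mp (Finset.mem_range.mp hi))]
    · conv_rhs => rw [Finset.sum_range_succ']
      rw [if_neg (by omega : ¬ (1 ≤ 0)), map_zero, zero_mul, add_zero]
      refine Finset.sum_congr rfl fun i hi => ?_
      rw [if_pos (by omega : 1 ≤ i + 1), Nat.add_sub_cancel]

/-- Let `y_k = Σ_{j=0}^k (1/j!) (ln z)^j f_{k−j}`, `0 ≤ k ≤ n`, be a flag with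
`f_0` a unit power series of constant term `1`, and define `N_0 := 1`,
`N_{k+1} := ϑ ∘ (1/N_k(y_k)) ∘ N_k`.  Then for all `0 ≤ j ≤ n+1` the operator `N_j`
lies in `ℚ⟦z⟧[ϑ]`, `N_j(y_i) = 0` for `0 ≤ i ≤ j−1`, and for `k ≤ n` the element
`N_k(y_k)` is a unit power series with constant term `1`. -/
theorem normal_form_operators
    (n : ℕ) (f : ℕ → PowerSeries ℚ)
    (hf0unit : IsUnit (f 0)) (hf0 : PowerSeries.constantCoeff (f 0) = 1) :
    (∀ j ≤ n + 1, ∃ b : ℕ → PowerSeries ℚ, ∀ p,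
        Nop f j p = ∑ i ∈ Finset.range (j + 1), Polynomial.C (b i) * thetaL^[i] p) ∧
    (∀ j ≤ n + 1, ∀ i < j, Nop f j (flag f i) = 0) ∧
    (∀ k ≤ n, ∃ g : PowerSeries ℚ, Nop f k (flag f k) = Polynomial.C g ∧
        IsUnit g ∧ PowerSeries.constantCoeff g = 1) := by
  refine ⟨fun j _ => Nop_form f j, fun j _ i hij => ?_, fun k _ => ?_⟩
  · obtain ⟨h, h0, hm, hlt⟩ := main_flag f hf0 j
    exact hlt i hij
  · obtain ⟨h, h0, hm, hlt⟩ := main_flag f hf0 k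
    refine ⟨h 0, ?_, ?_, h0⟩
    · have := hm 0
      rw [Nat.add_zero] at this
      rw [this, flag_zero']
    · rw [PowerSeries.isUnit_iff_constantCoeff, h0]
      exact isUnit_one
end

section
/- Let P be a monic second-order differential operator over ℂ(z) with solution basis {u, v}, and let w_k = u^{n−k} v^k / k! for 0 ≤ k ≤ n. If the exponents of P at z=0 are both 0 and u is holomorphic nonvanishing at 0 while v = ln(z)·u + h with h holomorphic, then w₀, …, w_n form a flag for the symmetric power Sym^n(P): w_k = Σ_{j=0}^k (1/j!) ln(z)^j g_{k−j} with g_0 = u^n a unit power series. -/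
open Polynomial

/-- Let `P` be a monic second-order operator whose solution basis at `z = 0` (where
both exponents are `0`) is `u, v` with `u = u₀ ∈ ℂ⟦z⟧` holomorphic and nonvanishing at
`0` and `v = ln(z)·u + h`, `h` holomorphic.  Then the solutions
`w_k = u^{n−k} v^k / k!`, `0 ≤ k ≤ n`, of the symmetric power `Symⁿ(P)` form a flag:
`w_k = Σ_{j=0}^k (1/j!) (ln z)^j g_{k−j}` for a single sequence `g` of power series
with `g_0 = u₀ⁿ` a unit.  (We model `ℂ⟦z⟧[ln z]` as polynomials in `X = ln z`.) -/
theorem sym_power_flag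
    (n : ℕ) (u₀ h : PowerSeries ℂ)
    (hu : PowerSeries.constantCoeff u₀ ≠ 0) :
    ∃ g : ℕ → PowerSeries ℂ,
      g 0 = u₀ ^ n ∧ IsUnit (g 0) ∧
      ∀ k ≤ n,
        ((k.factorial : ℂ)⁻¹) •
            ((Polynomial.C u₀) ^ (n - k) *
              (Polynomial.X * Polynomial.C u₀ + Polynomial.C h) ^ k) =
          ∑ j ∈ Finset.range (k + 1),
            ((j.factorial : ℂ)⁻¹) • (Polynomial.C (g (k - j)) * Polynomial.X ^ j) := by
  refine ⟨fun m => ((m.factorial : ℂ)⁻¹) • (u₀ ^ (n - m) * h ^ m), by simp, ?_, ?_⟩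
  · simp only [Nat.factorial_zero, Nat.cast_one, inv_one, one_smul, Nat.sub_zero, pow_zero,
      mul_one]
    refine IsUnit.pow n ?_
    rw [PowerSeries.isUnit_iff_constantCoeff]
    exact hu.isUnit
  · intro k hk
    rw [add_pow, Finset.mul_sum, Finset.smul_sum]
    refine Finset.sum_congr rfl ?_
    intro j hj
    simp only [Finset.mem_range, Nat.lt_succ_iff] at hj
    have hnk : n - (k - j) = (n - k) + j := by omega
    have hfac : ((k.factorial : ℂ))⁻¹ * (k.choose j : ℂ) =
        ((j.factorial : ℂ))⁻¹ * (((k - j).factorial : ℂ))⁻¹ := by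
      have hx := Nat.choose_mul_factorial_mul_factorial hj
      have h1 : (j.factorial : ℂ) ≠ 0 := Nat.cast_ne_zero.mpr j.factorial_ne_zero
      have h2 : ((k - j).factorial : ℂ) ≠ 0 := Nat.cast_ne_zero.mpr (k - j).factorial_ne_zero
      have h3 : (k.factorial : ℂ) ≠ 0 := Nat.cast_ne_zero.mpr k.factorial_ne_zero
      field_simp
      exact_mod_cast congrArg (Nat.cast : ℕ → ℂ) (by rw [← hx])
    have hcast : ((k.choose j : ℕ) : Polynomial (PowerSeries ℂ)) =
        ((k.choose j : ℂ)) • (1 : Polynomial (PowerSeries ℂ)) := by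
      rw [← Algebra.algebraMap_eq_smul_one, map_natCast]
    dsimp only
    rw [hnk, hcast]
    rw [← Polynomial.smul_C]
    simp only [mul_smul_comm, smul_mul_assoc, smul_smul, mul_one]
    rw [show ((k.factorial : ℂ))⁻¹ * (k.choose j : ℂ) = ((j.factorial : ℂ))⁻¹ * (((k - j).factorial : ℂ))⁻¹ from hfac]
    congr 1
    rw [map_mul, map_pow, map_pow, pow_add]
    ring
end

section
/- Suppose an irreducible monic operator L over ℂ(z) of order n+1 is self-dual (there is 0 ≠ α ∈ ℂ(z) with L α = α L^∨). Then the differential Galois group G of L, acting on the (n+1)-dimensional solution space, preserves a nondegenerate bilinear form that is antisymmetric if n is odd and symmetric if n is even; hence G embeds into Sp_{n+1}(ℂ) when n+1 is even and into O_{n+1}(ℂ) when n+1 is odd. -/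
set_option linter.unusedSectionVars false

namespace SelfDualAux

/-- abstract differential operators -/
inductive Op (E : Type*) where
  | coef (a : E) : Op E
  | der : Op E
  | add (p q : Op E) : Op E
  | mul (p q : Op E) : Op E

namespace Op

variable {E : Type*} [Field E]

/-- action of an operator -/
def act (D : E → E) : Op E → E → E
  | coef a, x => a * x
  | der, x => D x
  | add p q, x => act D p x + act D q x
  | mul p q, x => act D p (act D q x)

/-- formal adjoint -/
def adj : Op E → Op E
  | coef a => coef a
  | der => mul (coef (-1)) der
  | add p q => add (adj p) (adj q)
  | mul p q => mul (adj q) (adj p)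

/-- bilinear concomitant -/
def conc (D : E → E) : Op E → E → E → E
  | coef _, _, _ => 0
  | der, x, z => z * x
  | add p q, x, z => conc D p x z + conc D q x z
  | mul p q, x, z => conc D p (act D q x) z + conc D q x (act D (adj p) z)

/-- degree bound -/
def deg : Op E → ℕ
  | coef _ => 0
  | der => 1
  | add p q => max (deg p) (deg q)
  | mul p q => deg p + deg q

/-- iterated derivative operator -/
def derpow : ℕ → Op E
  | 0 => coef 1
  | k + 1 => mul der (derpow k)

/-- coefficients of an operator are fixed by σ -/
def Fixed (σ : E → E) : Op E → Prop
  | coef a => σ a = a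
  | der => True
  | add p q => Fixed σ p ∧ Fixed σ q
  | mul p q => Fixed σ p ∧ Fixed σ q

end Op

section Basic

variable {E : Type*} [Field E] {D : E → E}
variable (hDadd : ∀ x y, D (x + y) = D x + D y)
variable (hDmul : ∀ x y, D (x * y) = x * D y + D x * y)
include hDadd hDmul

lemma D_zero : D 0 = 0 := by
  have := hDadd 0 0; simpa using this.symm

lemma D_neg (x : E) : D (-x) = -D x := by
  have h := hDadd x (-x)
  rw [add_neg_cancel, D_zero hDadd hDmul] at h
  exact eq_neg_of_add_eq_zero_right h.symm

lemma D_one : D 1 = 0 := by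
  have := hDmul 1 1
  simpa using this

lemma D_sum {ι : Type*} (s : Finset ι) (f : ι → E) :
    D (∑ i ∈ s, f i) = ∑ i ∈ s, D (f i) := by
  classical
  induction s using Finset.cons_induction with
  | empty => simpa using D_zero hDadd hDmul
  | cons i s hi ih => rw [Finset.sum_cons, Finset.sum_cons, hDadd, ih]

lemma Dk_add (k : ℕ) (x y : E) : D^[k] (x + y) = D^[k] x + D^[k] y := by
  induction k generalizing x y with
  | zero => simp
  | succ k ih => rw [Function.iterate_succ_apply, hDadd, ih, Function.iterate_succ_apply, Function.iterate_succ_apply]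

lemma Dk_neg (k : ℕ) (x : E) : D^[k] (-x) = -D^[k] x := by
  induction k generalizing x with
  | zero => simp
  | succ k ih => rw [Function.iterate_succ_apply, D_neg hDadd hDmul, ih, Function.iterate_succ_apply]

lemma D_constmul {c : E} (hc : D c = 0) (x : E) : D (c * x) = c * D x := by
  rw [hDmul, hc]; ring

lemma Dk_constmul {c : E} (hc : D c = 0) (k : ℕ) (x : E) :
    D^[k] (c * x) = c * D^[k] x := by
  induction k generalizing x with
  | zero => simp
  | succ k ih => rw [Function.iterate_succ_apply, D_constmul hDadd hDmul hc, ih, Function.iterate_succ_apply]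

end Basic

section OpLemmas

variable {E : Type*} [Field E] {D : E → E}
variable (hDadd : ∀ x y, D (x + y) = D x + D y)
variable (hDmul : ∀ x y, D (x * y) = x * D y + D x * y)
include hDadd hDmul

open Op

lemma act_add (p : Op E) (x y : E) :
    act D p (x + y) = act D p x + act D p y := by
  induction p generalizing x y with
  | coef a => simp [act, mul_add]
  | der => simp [act, hDadd]
  | add p q ihp ihq => simp [act, ihp, ihq]; ring
  | mul p q ihp ihq => simp [act, ihp, ihq]

lemma act_constmul (p : Op E) {c : E} (hc : D c = 0) (x : E) :
    act D p (c * x) = c * act D p x := by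
  induction p generalizing x with
  | coef a => simp [act]; ring
  | der => simp [act, D_constmul hDadd hDmul hc]
  | add p q ihp ihq => simp [act, ihp, ihq]; ring
  | mul p q ihp ihq => simp [act, ihp, ihq]

lemma act_zero (p : Op E) : act D p 0 = 0 := by
  have := act_constmul hDadd hDmul p (D_zero hDadd hDmul) 0
  simpa using this

lemma conc_add1 (p : Op E) (x x' z : E) :
    conc D p (x + x') z = conc D p x z + conc D p x' z := by
  induction p generalizing x x' z with
  | coef a => simp [conc]
  | der => simp [conc, mul_add]
  | add p q ihp ihq => simp [conc, ihp, ihq]; ring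
  | mul p q ihp ihq => simp [conc, act_add hDadd hDmul, ihp, ihq]; ring

lemma conc_add2 (p : Op E) (x z z' : E) :
    conc D p x (z + z') = conc D p x z + conc D p x z' := by
  induction p generalizing x z z' with
  | coef a => simp [conc]
  | der => simp [conc, add_mul]
  | add p q ihp ihq => simp [conc, ihp, ihq]; ring
  | mul p q ihp ihq => simp [conc, act_add hDadd hDmul, ihp, ihq]; ring

lemma conc_constmul1 (p : Op E) {c : E} (hc : D c = 0) (x z : E) :
    conc D p (c * x) z = c * conc D p x z := by
  induction p generalizing x z with
  | coef a => simp [conc]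
  | der => simp [conc]; ring
  | add p q ihp ihq => simp [conc, ihp, ihq]; ring
  | mul p q ihp ihq =>
      simp [conc, act_constmul hDadd hDmul _ hc, ihp, ihq]; ring

lemma conc_constmul2 (p : Op E) {c : E} (hc : D c = 0) (x z : E) :
    conc D p x (c * z) = c * conc D p x z := by
  induction p generalizing x z with
  | coef a => simp [conc]
  | der => simp [conc]; ring
  | add p q ihp ihq => simp [conc, ihp, ihq]; ring
  | mul p q ihp ihq =>
      simp [conc, act_constmul hDadd hDmul _ hc, ihp, ihq]; ring

lemma conc_zero1 (p : Op E) (z : E) : conc D p 0 z = 0 := by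
  have := conc_constmul1 hDadd hDmul p (D_zero hDadd hDmul) 0 z
  simpa using this

/-- the Lagrange identity -/
lemma lagrange (p : Op E) (x z : E) :
    D (conc D p x z) = z * act D p x - act D (adj p) z * x := by
  induction p generalizing x z with
  | coef a => simp [conc, act, adj, D_zero hDadd hDmul]; ring
  | der => simp [conc, act, adj, hDmul]
  | add p q ihp ihq => simp [conc, act, adj, hDadd, ihp, ihq] <;> ring
  | mul p q ihp ihq =>
      simp only [conc, act, adj, hDadd, ihp, ihq]
      ring

lemma act_derpow (k : ℕ) (x : E) : act D (derpow k) x = D^[k] x := by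
  induction k generalizing x with
  | zero => simp [derpow, act]
  | succ k ih => rw [derpow, act, ih, Function.iterate_succ_apply']; rfl

lemma act_adj_derpow (k : ℕ) (u : E) :
    act D (adj (derpow k)) u = (-1 : E) ^ k * D^[k] u := by
  induction k generalizing u with
  | zero => simp [derpow, adj, act]
  | succ k ih =>
      show act D (adj (derpow k)) (act D (adj der) u) = _
      have h1 : act D (adj der) u = -D u := by simp [adj, act]
      rw [h1, ih, Dk_neg hDadd hDmul, Function.iterate_succ_apply]
      ring

end OpLemmas

section DegLemmas

variable {E : Type*} [Field E] {D : E → E}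

open Op

lemma deg_adj (p : Op E) : deg (adj p) = deg p := by
  induction p with
  | coef a => rfl
  | der => rfl
  | add p q ihp ihq => simp [adj, deg, ihp, ihq]
  | mul p q ihp ihq => simp [adj, deg, ihp, ihq]; omega

lemma deg_derpow (k : ℕ) : deg (derpow k : Op E) = k := by
  induction k with
  | zero => rfl
  | succ k ih => show 1 + deg (derpow k : Op E) = k + 1; omega

lemma conc_deg_zero {p : Op E} (h : deg p = 0) (x z : E) : conc D p x z = 0 := by
  induction p generalizing x z with
  | coef a => rfl
  | der => exact absurd h one_ne_zero
  | add p q ihp ihq =>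
      have hp : deg p = 0 := by simp [deg] at h; omega
      have hq : deg q = 0 := by simp [deg] at h; omega
      simp [conc, ihp hp, ihq hq]
  | mul p q ihp ihq =>
      have hp : deg p = 0 := by simp [deg] at h; omega
      have hq : deg q = 0 := by simp [deg] at h; omega
      simp [conc, ihp hp, ihq hq]

end DegLemmas

section LinOp

variable {E : Type*} [Field E]

/-- `T` is a linear differential operator of order at most `m` -/
def IsLinOp (D : E → E) (T : E → E) (m : ℕ) : Prop :=
  ∃ e : ℕ → E, ∀ x, T x = ∑ k ∈ Finset.range (m + 1), e k * D^[k] x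

/-- shift a coefficient sequence by one -/
def shift (e : ℕ → E) : ℕ → E
  | 0 => 0
  | k + 1 => e k

variable {D : E → E}

lemma lin_zero (m : ℕ) : IsLinOp D (fun _ => (0 : E)) m :=
  ⟨fun _ => 0, by simp⟩

lemma lin_of_mul (c : E) : IsLinOp D (fun x => c * x) 0 :=
  ⟨fun _ => c, by simp⟩

lemma lin_mono {T : E → E} {m m' : ℕ} (hT : IsLinOp D T m) (h : m ≤ m') :
    IsLinOp D T m' := by
  obtain ⟨e, he⟩ := hT
  refine ⟨fun k => if k < m + 1 then e k else 0, fun x => ?_⟩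
  rw [he x]
  rw [Finset.sum_congr rfl (fun k hk => by
    rw [if_pos (Finset.mem_range.mp hk)] :
      ∀ k ∈ Finset.range (m+1), e k * D^[k] x
        = (if k < m + 1 then e k else 0) * D^[k] x)]
  exact Finset.sum_subset (Finset.range_subset_range.mpr (by omega))
    (fun k _ hk => by
      rw [if_neg (by simpa using hk), zero_mul])

lemma lin_add {T T' : E → E} {m : ℕ} (hT : IsLinOp D T m) (hT' : IsLinOp D T' m) :
    IsLinOp D (fun x => T x + T' x) m := by
  obtain ⟨e, he⟩ := hT; obtain ⟨e', he'⟩ := hT'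
  exact ⟨fun k => e k + e' k, fun x => by
    simp [he x, he' x, add_mul, Finset.sum_add_distrib]⟩

lemma lin_cmul {T : E → E} {m : ℕ} (c : E) (hT : IsLinOp D T m) :
    IsLinOp D (fun x => c * T x) m := by
  obtain ⟨e, he⟩ := hT
  exact ⟨fun k => c * e k, fun x => by
    simp [he x, Finset.mul_sum, mul_assoc]⟩

section withD
variable (hDadd : ∀ x y, D (x + y) = D x + D y)
variable (hDmul : ∀ x y, D (x * y) = x * D y + D x * y)
include hDadd hDmul

lemma D_rep (e : ℕ → E) (m : ℕ) (x : E) :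
    D (∑ k ∈ Finset.range (m + 1), e k * D^[k] x)
      = ∑ k ∈ Finset.range (m + 2),
          ((if k < m + 1 then D (e k) else 0) + shift e k) * D^[k] x := by
  have hA : ∑ k ∈ Finset.range (m + 2), (if k < m + 1 then D (e k) else 0) * D^[k] x
      = ∑ k ∈ Finset.range (m + 1), D (e k) * D^[k] x := by
    rw [Finset.sum_range_succ, if_neg (lt_irrefl (m + 1)), zero_mul, add_zero]
    exact Finset.sum_congr rfl fun k hk => by
      rw [if_pos (Finset.mem_range.mp hk)]
  have hB : ∑ k ∈ Finset.range (m + 2), shift e k * D^[k] x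
      = ∑ k ∈ Finset.range (m + 1), e k * D^[k + 1] x := by
    rw [Finset.sum_range_succ']
    simp [shift]
  rw [D_sum hDadd hDmul]
  have hL : ∀ k ∈ Finset.range (m + 1),
      D (e k * D^[k] x) = D (e k) * D^[k] x + e k * D^[k + 1] x := by
    intro k _
    rw [hDmul, ← Function.iterate_succ_apply' D k x]
    ring
  rw [Finset.sum_congr rfl hL, Finset.sum_add_distrib]
  simp_rw [add_mul]
  rw [Finset.sum_add_distrib, hA, hB]

lemma lin_D {T : E → E} {m : ℕ} (hT : IsLinOp D T m) :
    IsLinOp D (fun x => D (T x)) (m + 1) := by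
  obtain ⟨e, he⟩ := hT
  refine ⟨fun k => (if k < m + 1 then D (e k) else 0) + shift e k, fun x => ?_⟩
  show D (T x) = _
  rw [he x, D_rep hDadd hDmul]

lemma lin_iter {T : E → E} {m : ℕ} (k : ℕ) (hT : IsLinOp D T m) :
    IsLinOp D (fun x => D^[k] (T x)) (m + k) := by
  induction k with
  | zero => simpa using hT
  | succ k ih =>
      have h := lin_D hDadd hDmul ih
      have : (fun x => D ((fun x => D^[k] (T x)) x)) = fun x => D^[k + 1] (T x) := by
        funext x; rw [Function.iterate_succ_apply']
      rw [this] at h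
      exact h

omit hDadd hDmul in
lemma lin_finsum (N m : ℕ) (f : ℕ → E → E) (h : ∀ k, k < N → IsLinOp D (f k) m) :
    IsLinOp D (fun x => ∑ k ∈ Finset.range N, f k x) m := by
  induction N with
  | zero => simpa using lin_zero m
  | succ N ih =>
      have h1 := lin_add (ih fun k hk => h k (by omega)) (h N (by omega))
      have : (fun x => ∑ k ∈ Finset.range (N + 1), f k x)
          = fun x => (∑ k ∈ Finset.range N, f k x) + f N x := by
        funext x; rw [Finset.sum_range_succ]
      rw [this]
      exact h1

lemma lin_comp {T S : E → E} {m m' : ℕ} (hT : IsLinOp D T m) (hS : IsLinOp D S m') :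
    IsLinOp D (fun x => T (S x)) (m + m') := by
  obtain ⟨e, he⟩ := hT
  have h1 : (fun x => T (S x)) = fun x => ∑ k ∈ Finset.range (m + 1), e k * D^[k] (S x) := by
    funext x; exact he (S x)
  rw [h1]
  refine lin_finsum (m + 1) (m + m') (fun k x => e k * D^[k] (S x)) fun k hk => ?_
  exact lin_cmul _ (lin_mono (lin_iter hDadd hDmul k hS) (by omega))

open Op

lemma act_lin (p : Op E) : IsLinOp D (act D p) (deg p) := by
  induction p with
  | coef a => exact lin_of_mul a
  | der =>
      refine ⟨fun k => if k = 1 then 1 else 0, fun x => ?_⟩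
      show D x = ∑ k ∈ Finset.range 2, _
      rw [Finset.sum_range_succ, Finset.sum_range_one]
      simp [act]
  | add p q ihp ihq =>
      exact lin_add (lin_mono ihp (le_max_left _ _)) (lin_mono ihq (le_max_right _ _))
  | mul p q ihp ihq =>
      have h := lin_comp hDadd hDmul ihp ihq
      exact h

lemma slot2 (p : Op E) (X : E) :
    IsLinOp D (fun Z => conc D p X Z) (deg p - 1) := by
  induction p generalizing X with
  | coef a => exact lin_zero _
  | der => exact ⟨fun _ => X, fun Z => by simp [conc, deg, mul_comm]⟩
  | add p q ihp ihq =>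
      have h := lin_add
        (lin_mono (ihp X) (show deg p - 1 ≤ deg (p.add q) - 1 from
          Nat.sub_le_sub_right (le_max_left _ _) 1))
        (lin_mono (ihq X) (show deg q - 1 ≤ deg (p.add q) - 1 from
          Nat.sub_le_sub_right (le_max_right _ _) 1))
      exact h
  | mul p q ihp ihq =>
      by_cases hq : deg q = 0
      · have h1 : (fun Z => conc D (mul p q) X Z)
            = fun Z => conc D p (act D q X) Z := by
          funext Z; simp [conc, conc_deg_zero hq]
        rw [h1]
        exact lin_mono (ihp _) (show deg p - 1 ≤ deg (p.mul q) - 1 from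
          Nat.sub_le_sub_right (Nat.le_add_right _ _) 1)
      · have h1 := lin_mono (ihp (act D q X))
          (show deg p - 1 ≤ deg (mul p q) - 1 by
            simp only [deg]; exact Nat.sub_le_sub_right (Nat.le_add_right _ _) 1)
        have h2 := lin_comp hDadd hDmul (ihq X) (act_lin hDadd hDmul (adj p))
        rw [deg_adj] at h2
        have h2' := lin_mono h2 (show deg q - 1 + deg p ≤ deg (mul p q) - 1 by
          simp only [deg]; omega)
        exact lin_add h1 h2'

lemma slot1 (p : Op E) (Z : E) :
    IsLinOp D (fun X => conc D p X Z) (deg p - 1) := by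
  induction p generalizing Z with
  | coef a => exact lin_zero _
  | der => exact lin_of_mul Z
  | add p q ihp ihq =>
      exact lin_add
        (lin_mono (ihp Z) (show deg p - 1 ≤ deg (p.add q) - 1 from
          Nat.sub_le_sub_right (le_max_left _ _) 1))
        (lin_mono (ihq Z) (show deg q - 1 ≤ deg (p.add q) - 1 from
          Nat.sub_le_sub_right (le_max_right _ _) 1))
  | mul p q ihp ihq =>
      by_cases hp : deg p = 0
      · have h1 : (fun X => conc D (mul p q) X Z)
            = fun X => conc D q X (act D (adj p) Z) := by
          funext X; simp [conc, conc_deg_zero hp]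
        rw [h1]
        exact lin_mono (ihq _) (show deg q - 1 ≤ deg (p.mul q) - 1 from
          Nat.sub_le_sub_right (Nat.le_add_left _ _) 1)
      · have h1 := lin_comp hDadd hDmul (ihp Z) (act_lin hDadd hDmul q)
        have h1' := lin_mono h1 (show deg p - 1 + deg q ≤ deg (mul p q) - 1 by
          simp only [deg]; omega)
        have h2 := lin_mono (ihq (act D (adj p) Z))
          (show deg q - 1 ≤ deg (p.mul q) - 1 from
            Nat.sub_le_sub_right (Nat.le_add_left _ _) 1)
        exact lin_add h1' h2

end withD

end LinOp

section Equivariance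

variable {E : Type*} [Field E] {D : E → E} {σ : E ≃+* E}
variable (hσD : ∀ x, σ (D x) = D (σ x))
include hσD

open Op

lemma act_equivar (p : Op E) (hp : Fixed (⇑σ) p) (x : E) :
    σ (act D p x) = act D p (σ x) := by
  induction p generalizing x with
  | coef a => show σ (a * x) = a * σ x; rw [map_mul]; rw [(hp : σ a = a)]
  | der => exact hσD x
  | add p q ihp ihq =>
      show σ (act D p x + act D q x) = _
      rw [map_add, ihp hp.1, ihq hp.2]; rfl
  | mul p q ihp ihq =>
      show σ (act D p (act D q x)) = _
      rw [ihp hp.1, ihq hp.2]; rfl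

omit hσD in
lemma Fixed_adj {p : Op E} (hp : Fixed (⇑σ) p) : Fixed (⇑σ) (adj p) := by
  induction p with
  | coef a => exact hp
  | der => exact ⟨show σ (-1 : E) = -1 by simp, trivial⟩
  | add p q ihp ihq => exact ⟨ihp hp.1, ihq hp.2⟩
  | mul p q ihp ihq => exact ⟨ihq hp.2, ihp hp.1⟩

omit hσD in
lemma Fixed_derpow (k : ℕ) : Fixed (⇑σ) (derpow k : Op E) := by
  induction k with
  | zero => exact map_one σ
  | succ k ih => exact ⟨trivial, ih⟩

lemma conc_equivar (p : Op E) (hp : Fixed (⇑σ) p) (x z : E) :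
    σ (conc D p x z) = conc D p (σ x) (σ z) := by
  induction p generalizing x z with
  | coef a => show σ 0 = 0; exact map_zero σ
  | der => show σ (z * x) = σ z * σ x; exact map_mul σ z x
  | add p q ihp ihq =>
      show σ (conc D p x z + conc D q x z) = _
      rw [map_add, ihp hp.1, ihq hp.2]; rfl
  | mul p q ihp ihq =>
      show σ (conc D p (act D q x) z + conc D q x (act D (adj p) z)) = _
      rw [map_add, ihp hp.1, ihq hp.2, act_equivar hσD q hp.2,
        act_equivar hσD (adj p) (Fixed_adj hp.1)]
      rfl

end Equivariance

section Foldr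

variable {E : Type*} [Field E] {D : E → E}

open Op

lemma act_foldr (l : List (Op E)) (x : E) :
    act D (l.foldr Op.add (Op.coef 0)) x = (l.map (fun p => act D p x)).sum := by
  induction l with
  | nil => simp [act]
  | cons p l ih => simp [act, ih]

lemma act_adj_foldr (l : List (Op E)) (z : E) :
    act D (adj (l.foldr Op.add (Op.coef 0))) z
      = (l.map (fun p => act D (adj p) z)).sum := by
  induction l with
  | nil => simp [adj, act]
  | cons p l ih => simp [adj, act, ih]

lemma deg_foldr_le (l : List (Op E)) (d : ℕ) (h : ∀ p ∈ l, deg p ≤ d) :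
    deg (l.foldr Op.add (Op.coef 0)) ≤ d := by
  induction l with
  | nil => simp [deg]
  | cons p l ih =>
      simp only [List.foldr_cons, deg, max_le_iff]
      exact ⟨h p (by simp), ih fun q hq => h q (by simp [hq])⟩

lemma Fixed_foldr (σ : E → E) (hσ0 : σ 0 = 0) (l : List (Op E))
    (h : ∀ p ∈ l, Fixed σ p) :
    Fixed σ (l.foldr Op.add (Op.coef 0)) := by
  induction l with
  | nil => exact hσ0
  | cons p l ih => exact ⟨h p (by simp), ih fun q hq => h q (by simp [hq])⟩

end Foldr


section Wronskian

variable {E : Type*} [Field E] [Algebra ℂ E] {D : E → E}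
variable (hDadd : ∀ x y, D (x + y) = D x + D y)
variable (hDmul : ∀ x y, D (x * y) = x * D y + D x * y)
variable (hconst : ∀ x : E, D x = 0 ↔ ∃ c : ℂ, x = algebraMap ℂ E c)
include hDadd hDmul hconst

/-- a family that is independent over the constants has nonvanishing Wronskian -/
lemma wronskian_ne_zero : ∀ (r : ℕ) (u : Fin r → E),
    (∀ c : Fin r → ℂ, (∑ i, algebraMap ℂ E (c i) * u i) = 0 → ∀ i, c i = 0) →
    (Matrix.of fun j i : Fin r => D^[(j : ℕ)] (u i)).det ≠ 0 := by
  intro r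
  induction r with
  | zero => intro u _; simp [Matrix.det_isEmpty]
  | succ r ih =>
      intro u hu
      intro hdet
      obtain ⟨g, hg0, hgv⟩ := (Matrix.exists_mulVec_eq_zero_iff).mpr hdet
      obtain ⟨s, hs⟩ := Function.ne_iff.mp hg0
      have hs' : g s ≠ 0 := by simpa using hs
      set h : Fin (r + 1) → E := fun i => g i / g s with hh
      have hrel : ∀ j : Fin (r + 1), ∑ i, D^[(j : ℕ)] (u i) * h i = 0 := by
        intro j
        have := congrFun hgv j
        simp only [Matrix.mulVec, dotProduct, Matrix.of_apply, Pi.zero_apply] at this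
        have h2 : ∑ i, D^[(j : ℕ)] (u i) * h i
            = (∑ i, D^[(j : ℕ)] (u i) * g i) / g s := by
          rw [Finset.sum_div]
          exact Finset.sum_congr rfl fun i _ => by rw [hh, mul_div_assoc]
        rw [h2, this, zero_div]
      have hrelN : ∀ j : ℕ, j ≤ r → ∑ i, D^[j] (u i) * h i = 0 := by
        intro j hj
        exact hrel ⟨j, by omega⟩
      have hds : D (h s) = 0 := by
        rw [hh]; simp only [div_self hs']; exact D_one hDadd hDmul
      have hder : ∀ j : ℕ, j < r → ∑ i, D^[j] (u i) * D (h i) = 0 := by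
        intro j hj
        have h1 := congrArg D (hrelN j (by omega))
        rw [D_sum hDadd hDmul, D_zero hDadd hDmul] at h1
        have h2 : ∀ i ∈ (Finset.univ : Finset (Fin (r + 1))),
            D (D^[j] (u i) * h i)
              = D^[j] (u i) * D (h i) + D^[j + 1] (u i) * h i := by
          intro i _
          rw [hDmul, ← Function.iterate_succ_apply' D j (u i)]
        rw [Finset.sum_congr rfl h2, Finset.sum_add_distrib] at h1
        rw [hrelN (j + 1) (by omega), add_zero] at h1
        exact h1
      -- the subfamily omitting `s` is independent
      have hu' : ∀ c : Fin r → ℂ,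
          (∑ i, algebraMap ℂ E (c i) * u (s.succAbove i)) = 0 → ∀ i, c i = 0 := by
        intro c hc i
        classical
        set cbar : Fin (r + 1) → ℂ := Fin.insertNth (α := fun _ => ℂ) s (0 : ℂ) c with hcbar
        have hsame : cbar s = 0 := by rw [hcbar]; exact Fin.insertNth_apply_same (α := fun _ => ℂ) s 0 c
        have habove : ∀ i : Fin r, cbar (s.succAbove i) = c i := by
          intro i; rw [hcbar]; exact Fin.insertNth_apply_succAbove (α := fun _ => ℂ) s 0 c i
        have h1 : ∑ i, algebraMap ℂ E (cbar i) * u i = 0 := by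
          rw [Fin.sum_univ_succAbove (fun i => algebraMap ℂ E (cbar i) * u i) s]
          rw [hsame]
          simp only [map_zero, zero_mul, zero_add]
          rw [Finset.sum_congr rfl fun i _ => by rw [habove i]]
          exact hc
        have h2 := hu cbar h1 (s.succAbove i)
        rwa [habove i] at h2
      have hdet' := ih (fun i => u (s.succAbove i)) hu'
      -- the derivatives of h vanish
      have hDh : ∀ i, D (h i) = 0 := by
        have hvec : (Matrix.of fun j i : Fin r => D^[(j : ℕ)] (u (s.succAbove i))).mulVec
            (fun i => D (h (s.succAbove i))) = 0 := by
          funext j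
          simp only [Matrix.mulVec, dotProduct, Matrix.of_apply, Pi.zero_apply]
          have h1 := hder j j.isLt
          rw [Fin.sum_univ_succAbove _ s, hds, mul_zero, zero_add] at h1
          exact h1
        by_contra hne
        push_neg at hne
        obtain ⟨i0, hi0⟩ := hne
        have hx0 : (fun i => D (h (s.succAbove i))) ≠ 0 := by
          intro hz
          rcases eq_or_ne i0 s with rfl | hne'
          · exact hi0 hds
          · obtain ⟨j0, hj0⟩ := Fin.exists_succAbove_eq hne'
            have := congrFun hz j0
            rw [hj0] at this
            exact hi0 this
        exact hdet' (Matrix.exists_mulVec_eq_zero_iff.mp ⟨_, hx0, hvec⟩)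
      -- so the h i are constants
      have hcon : ∀ i, ∃ c : ℂ, h i = algebraMap ℂ E c := fun i => (hconst _).mp (hDh i)
      choose γ hγ using hcon
      have h0 : ∑ i, algebraMap ℂ E (γ i) * u i = 0 := by
        have := hrelN 0 (by omega)
        simp only [Function.iterate_zero, id] at this
        rw [← this]
        exact Finset.sum_congr rfl fun i _ => by rw [← hγ i, mul_comm]
      have hγs0 := hu γ h0 s
      have hγs := hγ s
      rw [hγs0, map_zero, hh] at hγs
      have hγs2 : g s / g s = 0 := hγs
      rw [div_self hs'] at hγs2
      exact one_ne_zero hγs2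

/-- an operator expression killing an independent family has zero coefficients -/
lemma coeffs_vanish (r : ℕ) (u : Fin r → E)
    (hu : ∀ c : Fin r → ℂ, (∑ i, algebraMap ℂ E (c i) * u i) = 0 → ∀ i, c i = 0)
    (e : ℕ → E) (h : ∀ i, ∑ k ∈ Finset.range r, e k * D^[k] (u i) = 0) :
    ∀ k, k < r → e k = 0 := by
  intro k hk
  have hdet := wronskian_ne_zero hDadd hDmul hconst r u hu
  set M := Matrix.of fun j i : Fin r => D^[(j : ℕ)] (u i) with hM
  have hvm : Matrix.vecMul (fun j : Fin r => e (j : ℕ)) M = 0 := by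
    funext i
    simp only [Matrix.vecMul, dotProduct, Matrix.of_apply, Pi.zero_apply, hM]
    have h1 := h i
    rw [Finset.sum_range fun k => e k * D^[k] (u i)] at h1
    exact h1
  by_contra hek
  have hne : (fun j : Fin r => e (j : ℕ)) ≠ 0 := by
    intro hz
    exact hek (by simpa using congrFun hz ⟨k, hk⟩)
  exact hdet (Matrix.exists_vecMul_eq_zero_iff.mp ⟨_, hne, hvm⟩)

/-- a linear differential operator expression of order ≤ m all of whose values are
constants, in the presence of m+2 independent elements, is identically zero -/
lemma vanish (m : ℕ) (T : E → E) (e : ℕ → E)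
    (he : ∀ x, T x = ∑ k ∈ Finset.range (m + 1), e k * D^[k] x)
    (hder : ∀ x, D (T x) = 0)
    (u : Fin (m + 2) → E)
    (hu : ∀ c : Fin (m + 2) → ℂ, (∑ i, algebraMap ℂ E (c i) * u i) = 0 → ∀ i, c i = 0) :
    ∀ x, T x = 0 := by
  set f : ℕ → E := fun k => (if k < m + 1 then D (e k) else 0) + shift e k with hf
  have hrep : ∀ x, ∑ k ∈ Finset.range (m + 2), f k * D^[k] x = 0 := by
    intro x
    rw [← D_rep hDadd hDmul e m x, ← he x]
    exact hder x
  have hf0 : ∀ k, k < m + 2 → f k = 0 :=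
    coeffs_vanish hDadd hDmul hconst (m + 2) u hu f fun i => hrep (u i)
  -- recover e = 0 downwards
  have hetop : e m = 0 := by
    have := hf0 (m + 1) (by omega)
    rw [hf] at this
    simpa [shift, lt_irrefl] using this
  have hek : ∀ j, j ≤ m → e (m - j) = 0 := by
    intro j
    induction j with
    | zero => intro _; simpa using hetop
    | succ j ihj =>
        intro hj
        have h1 := hf0 (m - j) (by omega)
        rw [hf] at h1
        have hmj : m - j = (m - (j + 1)) + 1 := by omega
        have h2 : shift e (m - j) = e (m - (j + 1)) := by
          rw [hmj]; rfl
        rw [hmj] at h1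
        simp only [shift, if_pos (show m - (j + 1) + 1 < m + 1 by omega)] at h1
        have h3 : e (m - (j+1) + 1) = 0 := by
          have : m - (j + 1) + 1 = m - j := by omega
          rw [this]
          exact ihj (by omega)
        rw [h3, D_zero hDadd hDmul, zero_add] at h1
        exact h1
  have he0 : ∀ k, k < m + 1 → e k = 0 := by
    intro k hk
    have := hek (m - k) (by omega)
    rwa [show m - (m - k) = k by omega] at this
  intro x
  rw [he x]
  refine Finset.sum_eq_zero fun k hk => ?_
  rw [he0 k (Finset.mem_range.mp hk), zero_mul]

end Wronskian


end SelfDualAux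

open SelfDualAux

/-- Let `L = Σ_{i=0}^{n+1} a_i ∂^i` (monic, `a_{n+1} = 1`) be an irreducible monic
operator of order `n+1` over a differential field `K` (sitting inside a Picard–Vessiot
type extension `E ⊇ K` with field of constants `ℂ` and a full `(n+1)`-dimensional
solution space), which is self-dual: `L α = α L^∨` for some `0 ≠ α ∈ K`.  Then the
differential Galois group `G` (the `K`-automorphisms of `E` commuting with the
derivation), acting on the solution space, preserves a nondegenerate bilinear
`ℂ`-valued form which is `(−1)ⁿ`-symmetric — antisymmetric if `n` is odd, symmetric
if `n` is even — and hence, in terms of a solution basis `w` and the Gram matrix `J`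
of the form, every element of `G` is represented by a matrix `M` with
`Mᵀ J M = J`: `G` embeds into `Sp_{n+1}(ℂ)` when `n+1` is even and into
`O_{n+1}(ℂ)` when `n+1` is odd. -/
theorem selfdual_galois_group_preserves_form
    (n : ℕ) (E : Type*) [Field E] [Algebra ℂ E]
    (K : Subfield E) (D : E → E)
    (hDadd : ∀ x y, D (x + y) = D x + D y)
    (hDmul : ∀ x y, D (x * y) = x * D y + D x * y)
    (hDK : ∀ x ∈ K, D x ∈ K)
    (hCK : ∀ c : ℂ, algebraMap ℂ E c ∈ K)
    (hconst : ∀ x : E, D x = 0 ↔ ∃ c : ℂ, x = algebraMap ℂ E c)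
    (a : Fin (n + 2) → E) (haK : ∀ i, a i ∈ K)
    (hmonic : a (Fin.last (n + 1)) = 1)
    (L Ldual : E → E)
    (hL : ∀ y, L y = ∑ i : Fin (n + 2), a i * D^[(i : ℕ)] y)
    (hLdual : ∀ y, Ldual y = ∑ i : Fin (n + 2),
      (-1 : E) ^ (n + 1 + (i : ℕ)) * D^[(i : ℕ)] (a i * y))
    -- the solution space in `E` is full, with `ℂ`-basis `w`
    (w : Fin (n + 1) → E) (hw : ∀ i, L (w i) = 0)
    (hspan : ∀ x, L x = 0 → ∃ c : Fin (n + 1) → ℂ,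
      x = ∑ i, algebraMap ℂ E (c i) * w i)
    (hindep : ∀ c : Fin (n + 1) → ℂ,
      (∑ i, algebraMap ℂ E (c i) * w i) = 0 → ∀ i, c i = 0)
    -- irreducibility: no nontrivial subspace of solutions is stable under the
    -- differential Galois group
    (hirr : ∀ W : Submodule ℂ E, (∀ x ∈ W, L x = 0) →
      (∀ σ : E ≃+* E, (∀ k ∈ K, σ k = k) → (∀ x, σ (D x) = D (σ x)) →
        ∀ x ∈ W, σ x ∈ W) →
      (∀ x ∈ W, x = 0) ∨ (∀ x, L x = 0 → x ∈ W))
    -- self-duality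
    (α : E) (hαK : α ∈ K) (hα : α ≠ 0)
    (hself : ∀ y, L (α * y) = α * Ldual y) :
    ∃ B : E → E → ℂ,
      -- bilinearity on the solution space
      (∀ x y z, L x = 0 → L y = 0 → L z = 0 →
        B (x + y) z = B x z + B y z ∧ B z (x + y) = B z x + B z y) ∧
      (∀ (c : ℂ) (x y), L x = 0 → L y = 0 →
        B (algebraMap ℂ E c * x) y = c * B x y ∧ B x (algebraMap ℂ E c * y) = c * B x y) ∧
      -- `(−1)ⁿ`-symmetry
      (∀ x y, L x = 0 → L y = 0 → B x y = (-1 : ℂ) ^ n * B y x) ∧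
      -- nondegeneracy
      (∀ x, L x = 0 → (∀ y, L y = 0 → B x y = 0) → x = 0) ∧
      -- invariance under the differential Galois group
      (∀ σ : E ≃+* E, (∀ k ∈ K, σ k = k) → (∀ x, σ (D x) = D (σ x)) →
        ∀ x y, L x = 0 → L y = 0 → B (σ x) (σ y) = B x y) ∧
      -- matrix form: `G` embeds into the isometry group of the Gram matrix `J`,
      -- i.e. into `Sp_{n+1}(ℂ)` for `n+1` even and `O_{n+1}(ℂ)` for `n+1` odd
      (∃ J : Matrix (Fin (n + 1)) (Fin (n + 1)) ℂ,
        (∀ i j, J i j = B (w i) (w j)) ∧ J.det ≠ 0 ∧ J.transpose = (-1 : ℂ) ^ n • J ∧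
        ∀ σ : E ≃+* E, (∀ k ∈ K, σ k = k) → (∀ x, σ (D x) = D (σ x)) →
          ∃ M : Matrix (Fin (n + 1)) (Fin (n + 1)) ℂ,
            (∀ i, σ (w i) = ∑ j, algebraMap ℂ E (M j i) * w j) ∧
            M.transpose * J * M = J) := by
  classical
  have hinj : Function.Injective (algebraMap ℂ E) := RingHom.injective _
  have hDc : ∀ c : ℂ, D (algebraMap ℂ E c) = 0 := fun c => (hconst _).mpr ⟨c, rfl⟩
  -- linearity of L
  have hLadd : ∀ x y, L (x + y) = L x + L y := by
    intro x y
    rw [hL, hL, hL, ← Finset.sum_add_distrib]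
    exact Finset.sum_congr rfl fun i _ => by
      rw [Dk_add hDadd hDmul]; ring
  have hL0 : L 0 = 0 := by
    have := hLadd 0 0
    simpa using this.symm
  have hLc : ∀ (c : ℂ) (x : E), L (algebraMap ℂ E c * x) = algebraMap ℂ E c * L x := by
    intro c x
    rw [hL, hL, Finset.mul_sum]
    exact Finset.sum_congr rfl fun i _ => by
      rw [Dk_constmul hDadd hDmul (hDc c)]; ring
  have hLfin : ∀ (s : Finset (Fin (n + 1))) (g : Fin (n + 1) → E),
      L (∑ i ∈ s, g i) = ∑ i ∈ s, L (g i) := by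
    intro s g
    induction s using Finset.cons_induction with
    | empty => simpa using hL0
    | cons i s hi ih => rw [Finset.sum_cons, Finset.sum_cons, hLadd, ih]
  have hLspan : ∀ c : Fin (n + 1) → ℂ, L (∑ i, algebraMap ℂ E (c i) * w i) = 0 := by
    intro c
    rw [hLfin]
    exact Finset.sum_eq_zero fun i _ => by rw [hLc, hw, mul_zero]
  by_cases hbig : ∀ x : E, ∃ c : Fin (n + 1) → ℂ, x = ∑ i, algebraMap ℂ E (c i) * w i
  · -- degenerate case : E is spanned by the solutions
    have hallsol : ∀ x : E, L x = 0 := by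
      intro x
      obtain ⟨c, rfl⟩ := hbig x
      exact hLspan c
    have hstab : ∀ σ : E ≃+* E, (∀ k ∈ K, σ k = k) → (∀ x, σ (D x) = D (σ x)) →
        ∀ x ∈ Submodule.span ℂ {(1 : E)}, σ x ∈ Submodule.span ℂ {(1 : E)} := by
      intro σ hσK _ x hx
      rw [Submodule.mem_span_singleton] at hx ⊢
      obtain ⟨t, rfl⟩ := hx
      refine ⟨t, ?_⟩
      have h1 : t • (1 : E) = algebraMap ℂ E t := (Algebra.algebraMap_eq_smul_one t).symm
      rw [h1, hσK _ (hCK t)]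
    rcases hirr (Submodule.span ℂ {(1 : E)}) (fun x _ => hallsol x) hstab with hleft | hright
    · exact absurd (hleft 1 (Submodule.mem_span_singleton_self 1)) one_ne_zero
    have hall1 : ∀ x : E, ∃ t : ℂ, x = algebraMap ℂ E t := by
      intro x
      have h1 := hright x (hallsol x)
      rw [Submodule.mem_span_singleton] at h1
      obtain ⟨t, ht⟩ := h1
      exact ⟨t, by rw [← ht, Algebra.smul_def, mul_one]⟩
    -- n = 0
    have hn0 : n = 0 := by
      by_contra hn
      set i0 : Fin (n + 1) := ⟨0, by omega⟩ with hi0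
      set i1 : Fin (n + 1) := ⟨1, by omega⟩ with hi1
      have h01 : i0 ≠ i1 := by
        intro h
        have := congrArg Fin.val h
        rw [hi0, hi1] at this
        simp at this
      obtain ⟨γ0, hγ0⟩ := hall1 (w i0)
      obtain ⟨γ1, hγ1⟩ := hall1 (w i1)
      set c : Fin (n + 1) → ℂ :=
        fun i => if i = i0 then γ1 else if i = i1 then -γ0 else 0 with hc
      have hsum : (∑ i, algebraMap ℂ E (c i) * w i) = 0 := by
        have hz : ∀ i ∈ Finset.univ, i ∉ ({i0, i1} : Finset (Fin (n + 1))) →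
            algebraMap ℂ E (c i) * w i = 0 := by
          intro i _ hi
          simp only [Finset.mem_insert, Finset.mem_singleton] at hi
          push_neg at hi
          rw [hc]
          simp [hi.1, hi.2]
        rw [← Finset.sum_subset (Finset.subset_univ ({i0, i1} : Finset (Fin (n + 1)))) hz,
          Finset.sum_pair h01]
        have hci0 : c i0 = γ1 := by rw [hc]; simp
        have hci1 : c i1 = -γ0 := by rw [hc]; simp [h01.symm]
        rw [hci0, hci1, hγ0, hγ1, ← map_mul, ← map_mul, ← map_add]
        rw [show γ1 * γ0 + -γ0 * γ1 = 0 by ring, map_zero]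
      have h1 := hindep c hsum
      have h2 := h1 i0
      rw [hc] at h2
      simp at h2
      -- γ1 = 0, so w i1 = 0
      have hwz : w i1 = 0 := by rw [hγ1, h2, map_zero]
      set c' : Fin (n + 1) → ℂ := fun i => if i = i1 then 1 else 0 with hc'
      have hsum' : (∑ i, algebraMap ℂ E (c' i) * w i) = 0 := by
        have h3 : ∀ i ∈ Finset.univ, algebraMap ℂ E (c' i) * w i
            = if i = i1 then w i1 else 0 := by
          intro i _
          rw [hc']
          by_cases h4 : i = i1
          · simp [h4]
          · simp [h4]
        rw [Finset.sum_congr rfl h3, Finset.sum_ite_eq' Finset.univ i1 fun _ => w i1]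
        simp [hwz]
      have h5 := hindep c' hsum' i1
      rw [hc'] at h5
      simp at h5
    subst hn0
    -- E = ℂ
    have hbij : Function.Bijective (algebraMap ℂ E) :=
      ⟨hinj, fun x => (hall1 x).elim fun t ht => ⟨t, ht.symm⟩⟩
    set ι : ℂ ≃+* E := RingEquiv.ofBijective (algebraMap ℂ E : ℂ →+* E) hbij with hι
    have hιap : ∀ t : ℂ, ι t = algebraMap ℂ E t := fun t => rfl
    have hιsy : ∀ t : ℂ, ι.symm (algebraMap ℂ E t) = t := fun t => by
      rw [← hιap]; exact ι.symm_apply_apply t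
    have hε0 : ∀ x : E, ι.symm x = 0 → x = 0 := fun x hx => by
      have h1 := congrArg ι hx
      rwa [ι.apply_symm_apply, map_zero] at h1
    have hw0 : w 0 ≠ 0 := by
      intro h0
      have hs : (∑ i, algebraMap ℂ E ((fun _ => (1 : ℂ)) i) * w i) = 0 := by
        simp [Fin.sum_univ_succ, h0]
      exact one_ne_zero (hindep _ hs 0)
    set Bd : E → E → ℂ := fun x y => ι.symm (x * y * α⁻¹) with hBd
    refine ⟨Bd, ?_, ?_, ?_, ?_, ?_, ?_⟩
    · intro x y z _ _ _
      constructor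
      · simp only [hBd]
        rw [show (x + y) * z * α⁻¹ = x * z * α⁻¹ + y * z * α⁻¹ by ring, map_add]
      · simp only [hBd]
        rw [show z * (x + y) * α⁻¹ = z * x * α⁻¹ + z * y * α⁻¹ by ring, map_add]
    · intro c x y _ _
      constructor
      · simp only [hBd]
        rw [show algebraMap ℂ E c * x * y * α⁻¹ = algebraMap ℂ E c * (x * y * α⁻¹) by ring,
          map_mul, hιsy]
      · simp only [hBd]
        rw [show x * (algebraMap ℂ E c * y) * α⁻¹ = algebraMap ℂ E c * (x * y * α⁻¹) by ring,
          map_mul, hιsy]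
    · intro x y _ _
      simp only [hBd]
      rw [pow_zero, one_mul, mul_comm y x]
    · intro x _ h
      have h1 := h x (hallsol x)
      simp only [hBd] at h1
      have h2 : x * x * α⁻¹ = 0 := hε0 _ h1
      rcases mul_eq_zero.mp h2 with h3 | h3
      · rcases mul_eq_zero.mp h3 with h4 | h4 <;> exact h4
      · exact absurd h3 (inv_ne_zero hα)
    · intro σ hσK _ x y _ _
      obtain ⟨tx, rfl⟩ := hall1 x
      obtain ⟨ty, rfl⟩ := hall1 y
      rw [hσK _ (hCK tx), hσK _ (hCK ty)]
    · refine ⟨Matrix.of fun i j => Bd (w i) (w j), fun i j => rfl, ?_, ?_, ?_⟩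
      · rw [Matrix.det_fin_one]
        intro h0
        have h1 : (Matrix.of fun i j => Bd (w i) (w j)) 0 0 = Bd (w 0) (w 0) := rfl
        rw [h1] at h0
        simp only [hBd] at h0
        have h2 : w 0 * w 0 * α⁻¹ = 0 := hε0 _ h0
        rcases mul_eq_zero.mp h2 with h3 | h3
        · rcases mul_eq_zero.mp h3 with h4 | h4 <;> exact hw0 h4
        · exact inv_ne_zero hα h3
      · funext i j
        have hi : i = 0 := Fin.eq_zero i
        have hj : j = 0 := Fin.eq_zero j
        subst hi; subst hj
        show (Matrix.of fun i j => Bd (w i) (w j)) 0 0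
            = ((-1 : ℂ) ^ 0 • Matrix.of fun i j => Bd (w i) (w j)) 0 0
        rw [Matrix.smul_apply, pow_zero, one_smul]
      · intro σ hσK _
        refine ⟨1, ?_, ?_⟩
        · intro i
          have hi : i = 0 := Fin.eq_zero i
          subst hi
          obtain ⟨t, ht⟩ := hall1 (w 0)
          rw [ht, hσK _ (hCK t)]
          rw [Fin.sum_univ_succ]
          simp [Matrix.one_apply]
          exact ht.symm
        · rw [Matrix.transpose_one, Matrix.one_mul, Matrix.mul_one]
  · -- main case
    push_neg at hbig
    obtain ⟨v, hv⟩ := hbig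
    have hLv : L v ≠ 0 := by
      intro h0
      obtain ⟨c, hc⟩ := hspan v h0
      exact hv c hc
    -- the independent family of size n+2
    set u : Fin (n + 2) → E := Fin.snoc w v with hu_def
    have hu : ∀ c : Fin (n + 2) → ℂ, (∑ i, algebraMap ℂ E (c i) * u i) = 0 →
        ∀ i, c i = 0 := by
      intro c hc
      rw [Fin.sum_univ_castSucc] at hc
      have hcs : ∀ i : Fin (n + 1), u i.castSucc = w i := by
        intro i; rw [hu_def]; simp
      have hlast : u (Fin.last (n + 1)) = v := by
        rw [hu_def]; simp
      rw [hlast, Finset.sum_congr rfl fun i _ => by rw [hcs i]] at hc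
      by_cases hcl : c (Fin.last (n + 1)) = 0
      · rw [hcl, map_zero, zero_mul, add_zero] at hc
        have h1 := hindep _ hc
        intro i
        rcases Fin.eq_castSucc_or_eq_last i with ⟨j, rfl⟩ | rfl
        · exact h1 j
        · exact hcl
      · exfalso
        have hcl' : algebraMap ℂ E (c (Fin.last (n + 1))) ≠ 0 := fun h0 =>
          hcl (hinj (h0.trans (map_zero _).symm))
        apply hv fun i => -(c i.castSucc) / c (Fin.last (n + 1))
        have h2 : algebraMap ℂ E (c (Fin.last (n + 1))) * v
            = -∑ i, algebraMap ℂ E (c i.castSucc) * w i :=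
          eq_neg_of_add_eq_zero_right hc
        apply mul_left_cancel₀ hcl'
        rw [h2, Finset.mul_sum, ← Finset.sum_neg_distrib]
        refine Finset.sum_congr rfl fun i _ => ?_
        rw [← mul_assoc, ← map_mul, ← neg_mul]
        congr 1
        rw [← map_neg]
        congr 1
        field_simp
    -- the differential operator
    set Lop : Op E :=
      (List.ofFn fun i : Fin (n + 2) =>
        Op.mul (Op.coef (a i)) (Op.derpow (i : ℕ))).foldr Op.add (Op.coef 0) with hLop
    have hactL : ∀ x, Op.act D Lop x = L x := by
      intro x
      rw [hLop, act_foldr, List.map_ofFn, List.sum_ofFn, hL]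
      refine Finset.sum_congr rfl fun i _ => ?_
      show a i * Op.act D (Op.derpow (i : ℕ)) x = _
      rw [act_derpow hDadd hDmul]
    have hsq : (-1 : E) ^ (n + 1) * (-1 : E) ^ (n + 1) = 1 := by
      rw [← pow_add]
      exact Even.neg_one_pow ⟨n + 1, by ring⟩
    have hadjL : ∀ z, Op.act D (Op.adj Lop) z = (-1 : E) ^ (n + 1) * Ldual z := by
      intro z
      rw [hLop, act_adj_foldr, List.map_ofFn, List.sum_ofFn, hLdual, Finset.mul_sum]
      refine Finset.sum_congr rfl fun i _ => ?_
      show Op.act D (Op.adj (Op.derpow (i : ℕ))) (a i * z) = _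
      rw [act_adj_derpow hDadd hDmul, pow_add]
      linear_combination (-((-1 : E) ^ (i : ℕ) * D^[(i : ℕ)] (a i * z))) * hsq
    have hdegL : Op.deg Lop ≤ n + 1 := by
      rw [hLop]
      refine deg_foldr_le _ _ fun p hp => ?_
      obtain ⟨i, rfl⟩ := List.mem_ofFn.mp hp
      show Op.deg (Op.mul (Op.coef (a i)) (Op.derpow (i : ℕ))) ≤ n + 1
      have : Op.deg (Op.mul (Op.coef (a i)) (Op.derpow (i : ℕ)))
          = (i : ℕ) := by
        show 0 + Op.deg (Op.derpow (i : ℕ)) = (i : ℕ)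
        rw [deg_derpow, zero_add]
      rw [this]
      omega
    have hFixL : ∀ σ : E ≃+* E, (∀ k ∈ K, σ k = k) → Op.Fixed (⇑σ) Lop := by
      intro σ hσK
      rw [hLop]
      refine Fixed_foldr _ (map_zero σ) _ fun p hp => ?_
      obtain ⟨i, rfl⟩ := List.mem_ofFn.mp hp
      exact ⟨hσK _ (haK i), Fixed_derpow (σ := σ) (i : ℕ)⟩
    -- the pairing
    set Q : E → E → E := fun x y => Op.conc D Lop x (α⁻¹ * y) with hQdef
    have hLdualinv : ∀ y, Ldual (α⁻¹ * y) = α⁻¹ * L y := by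
      intro y
      have h1 := hself (α⁻¹ * y)
      rw [show α * (α⁻¹ * y) = y by field_simp] at h1
      rw [h1, ← mul_assoc, inv_mul_cancel₀ hα, one_mul]
    have hQD : ∀ x y, D (Q x y)
        = (α⁻¹ * y) * L x - (-1 : E) ^ (n + 1) * (α⁻¹ * L y) * x := by
      intro x y
      rw [hQdef]
      show D (Op.conc D Lop x (α⁻¹ * y)) = _
      rw [lagrange hDadd hDmul Lop x (α⁻¹ * y), hactL, hadjL, hLdualinv]
    have hQ0 : ∀ x y, L x = 0 → L y = 0 → D (Q x y) = 0 := by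
      intro x y hx hy
      rw [hQD, hx, hy]
      ring
    set B : E → E → ℂ := fun x y =>
      if h : D (Q x y) = 0 then ((hconst _).mp h).choose else 0 with hBdef
    have hB : ∀ x y, L x = 0 → L y = 0 → algebraMap ℂ E (B x y) = Q x y := by
      intro x y hx hy
      have h := hQ0 x y hx hy
      rw [hBdef]
      show algebraMap ℂ E (if h' : D (Q x y) = 0 then ((hconst _).mp h').choose else 0) = _
      rw [dif_pos h]
      exact ((hconst _).mp h).choose_spec.symm
    -- linearity of Q
    have hQadd1 : ∀ x x' y, Q (x + x') y = Q x y + Q x' y := fun x x' y =>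
      conc_add1 hDadd hDmul Lop x x' (α⁻¹ * y)
    have hQadd2 : ∀ x y y', Q x (y + y') = Q x y + Q x y' := by
      intro x y y'
      rw [hQdef]
      show Op.conc D Lop x (α⁻¹ * (y + y')) = _
      rw [mul_add, conc_add2 hDadd hDmul]
    have hQc1 : ∀ (c : ℂ) x y, Q (algebraMap ℂ E c * x) y = algebraMap ℂ E c * Q x y :=
      fun c x y => conc_constmul1 hDadd hDmul Lop (hDc c) x (α⁻¹ * y)
    have hQc2 : ∀ (c : ℂ) x y, Q x (algebraMap ℂ E c * y) = algebraMap ℂ E c * Q x y := by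
      intro c x y
      rw [hQdef]
      show Op.conc D Lop x (α⁻¹ * (algebraMap ℂ E c * y)) = _
      rw [mul_left_comm, conc_constmul2 hDadd hDmul Lop (hDc c)]
    -- symmetry at the level of Q
    have hβD : D ((-1 : E) ^ (n + 1)) = 0 := by
      have h1 : ((-1 : E)) ^ (n + 1) = algebraMap ℂ E ((-1) ^ (n + 1)) := by
        rw [map_pow, map_neg, map_one]
      rw [h1]
      exact hDc _
    have hsymQ : ∀ y x, Q x y + (-1 : E) ^ (n + 1) * Q y x = 0 := by
      intro y
      set T : E → E := fun x => Q x y + (-1 : E) ^ (n + 1) * Q y x with hT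
      have h1 : IsLinOp D (fun x => Q x y) n := by
        rw [hQdef]
        exact lin_mono (slot1 hDadd hDmul Lop (α⁻¹ * y)) (by omega)
      have h2 : IsLinOp D (fun x => (-1 : E) ^ (n + 1) * Q y x) n := by
        rw [hQdef]
        refine lin_cmul _ ?_
        have h3 := lin_comp hDadd hDmul (slot2 hDadd hDmul Lop y) (lin_of_mul α⁻¹)
        exact lin_mono h3 (by omega)
      have hTlin : IsLinOp D T n := by
        rw [hT]; exact lin_add h1 h2
      obtain ⟨e, he⟩ := hTlin
      have hTder : ∀ x, D (T x) = 0 := by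
        intro x
        rw [hT]
        show D (Q x y + (-1 : E) ^ (n + 1) * Q y x) = 0
        rw [hDadd, D_constmul hDadd hDmul hβD, hQD, hQD]
        linear_combination (-(α⁻¹ * L x * y)) * hsq
      have := vanish hDadd hDmul hconst n T e he hTder u hu
      intro x
      exact this x
    -- nondegeneracy at the level of Q
    have hndQ : ∀ x₀, L x₀ = 0 → (∀ i, Q x₀ (w i) = 0) → x₀ = 0 := by
      intro x₀ hx₀ hQw
      have hlin : IsLinOp D (fun y => Q x₀ y) n := by
        rw [hQdef]
        have h3 := lin_comp hDadd hDmul (slot2 hDadd hDmul Lop x₀) (lin_of_mul α⁻¹)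
        exact lin_mono h3 (by omega)
      obtain ⟨e, he⟩ := hlin
      have he' : ∀ y, Q x₀ y = ∑ k ∈ Finset.range (n + 1), e k * D^[k] y := he
      have he0 : ∀ k, k < n + 1 → e k = 0 := by
        refine coeffs_vanish hDadd hDmul hconst (n + 1) w hindep e fun i => ?_
        rw [← he' (w i)]
        exact hQw i
      have hT0 : ∀ y, Q x₀ y = 0 := by
        intro y
        rw [he' y]
        exact Finset.sum_eq_zero fun k hk =>
          by rw [he0 k (Finset.mem_range.mp hk), zero_mul]
      have hkey := hQD x₀ v
      rw [show Q x₀ v = 0 from hT0 v, D_zero hDadd hDmul, hx₀] at hkey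
      have h4 : (-1 : E) ^ (n + 1) * (α⁻¹ * L v) * x₀ = 0 := by
        have := hkey.symm
        rw [mul_zero, zero_sub, neg_eq_zero] at this
        exact this
      rcases mul_eq_zero.mp h4 with h5 | h5
      · exfalso
        rcases mul_eq_zero.mp h5 with h6 | h6
        · exact pow_ne_zero _ (neg_ne_zero.mpr one_ne_zero) h6
        · rcases mul_eq_zero.mp h6 with h7 | h7
          · exact inv_ne_zero hα h7
          · exact hLv h7
      · exact h5
    -- solutions are preserved by the Galois group
    have hσsol : ∀ σ : E ≃+* E, (∀ k ∈ K, σ k = k) → (∀ x, σ (D x) = D (σ x)) →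
        ∀ z, L z = 0 → L (σ z) = 0 := by
      intro σ hσK hσD z hz
      rw [← hactL, ← act_equivar hσD Lop (hFixL σ hσK) z, hactL, hz, map_zero]
    -- now assemble all conclusions
    refine ⟨B, ?_, ?_, ?_, ?_, ?_, ?_⟩
    · -- additivity
      intro x y z hx hy hz
      constructor
      · apply hinj
        rw [map_add, hB _ _ (by rw [hLadd, hx, hy, add_zero]) hz, hB _ _ hx hz,
          hB _ _ hy hz, hQadd1]
      · apply hinj
        rw [map_add, hB _ _ hz (by rw [hLadd, hx, hy, add_zero]), hB _ _ hz hx,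
          hB _ _ hz hy, hQadd2]
    · -- scalars
      intro c x y hx hy
      constructor
      · apply hinj
        rw [map_mul, hB _ _ (by rw [hLc, hx, mul_zero]) hy, hB _ _ hx hy, hQc1]
      · apply hinj
        rw [map_mul, hB _ _ hx (by rw [hLc, hy, mul_zero]), hB _ _ hx hy, hQc2]
    · -- symmetry
      intro x y hx hy
      have h := hsymQ y x
      rw [← hB x y hx hy, ← hB y x hy hx] at h
      have h2 : algebraMap ℂ E (B x y + (-1) ^ (n + 1) * B y x) = algebraMap ℂ E 0 := by
        rw [map_add, map_mul, map_pow, map_neg, map_one, map_zero]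
        exact h
      have h3 := hinj h2
      linear_combination h3
    · -- nondegeneracy
      intro x hx hall
      refine hndQ x hx fun i => ?_
      rw [← hB x (w i) hx (hw i), hall (w i) (hw i), map_zero]
    · -- invariance
      intro σ hσK hσD x y hx hy
      have hσα : σ α⁻¹ = α⁻¹ := by
        have h1 := hσK α hαK
        have h3 : σ α⁻¹ * σ α = 1 := by
          rw [← map_mul, inv_mul_cancel₀ hα, map_one]
        rw [h1] at h3
        exact eq_inv_of_mul_eq_one_left h3
      have hQσ : Q (σ x) (σ y) = σ (Q x y) := by
        rw [hQdef]
        show Op.conc D Lop (σ x) (α⁻¹ * σ y) = σ (Op.conc D Lop x (α⁻¹ * y))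
        rw [conc_equivar hσD Lop (hFixL σ hσK) x (α⁻¹ * y), map_mul, hσα]
      apply hinj
      rw [hB _ _ (hσsol σ hσK hσD x hx) (hσsol σ hσK hσD y hy), hQσ, ← hB _ _ hx hy]
      exact hσK _ (hCK _)
    · -- the Gram matrix
      -- bilinearity over sums
      have hQsum1 : ∀ (g : Fin (n + 1) → E) y,
          Q (∑ i, g i) y = ∑ i, Q (g i) y := by
        intro g y
        induction (Finset.univ : Finset (Fin (n + 1))) using Finset.cons_induction with
        | empty =>
            simpa using conc_zero1 hDadd hDmul Lop (α⁻¹ * y)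
        | cons i s hi ih => rw [Finset.sum_cons, Finset.sum_cons, hQadd1, ih]
      have hQsum2 : ∀ (g : Fin (n + 1) → E) x,
          Q x (∑ i, g i) = ∑ i, Q x (g i) := by
        intro g x
        have hz : Q x 0 = 0 := by
          rw [hQdef]
          show Op.conc D Lop x (α⁻¹ * 0) = 0
          rw [mul_zero]
          have h := conc_constmul2 hDadd hDmul Lop (D_zero hDadd hDmul) x (0 : E)
          simpa using h
        induction (Finset.univ : Finset (Fin (n + 1))) using Finset.cons_induction with
        | empty => simpa using hz
        | cons i s hi ih => rw [Finset.sum_cons, Finset.sum_cons, hQadd2, ih]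
      have hBsum1 : ∀ (c : Fin (n + 1) → ℂ) y, L y = 0 →
          B (∑ i, algebraMap ℂ E (c i) * w i) y = ∑ i, c i * B (w i) y := by
        intro c y hy
        apply hinj
        rw [hB _ _ (hLspan c) hy, hQsum1, map_sum]
        refine Finset.sum_congr rfl fun i _ => ?_
        rw [map_mul, hQc1, hB _ _ (hw i) hy]
      have hBsum2 : ∀ (c : Fin (n + 1) → ℂ) x, L x = 0 →
          B x (∑ i, algebraMap ℂ E (c i) * w i) = ∑ i, c i * B x (w i) := by
        intro c x hx
        apply hinj
        rw [hB _ _ hx (hLspan c), hQsum2, map_sum]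
        refine Finset.sum_congr rfl fun i _ => ?_
        rw [map_mul, hQc2, hB _ _ hx (hw i)]
      have hsymB : ∀ x y, L x = 0 → L y = 0 → B x y = (-1 : ℂ) ^ n * B y x := by
        intro x y hx hy
        have h := hsymQ y x
        rw [← hB x y hx hy, ← hB y x hy hx] at h
        have h2 : algebraMap ℂ E (B x y + (-1) ^ (n + 1) * B y x) = algebraMap ℂ E 0 := by
          rw [map_add, map_mul, map_pow, map_neg, map_one, map_zero]
          exact h
        have h3 := hinj h2
        linear_combination h3
      have hinvB : ∀ σ : E ≃+* E, (∀ k ∈ K, σ k = k) → (∀ x, σ (D x) = D (σ x)) →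
          ∀ x y, L x = 0 → L y = 0 → B (σ x) (σ y) = B x y := by
        intro σ hσK hσD x y hx hy
        have hσα : σ α⁻¹ = α⁻¹ := by
          have h1 := hσK α hαK
          have h3 : σ α⁻¹ * σ α = 1 := by
            rw [← map_mul, inv_mul_cancel₀ hα, map_one]
          rw [h1] at h3
          exact eq_inv_of_mul_eq_one_left h3
        have hQσ : Q (σ x) (σ y) = σ (Q x y) := by
          rw [hQdef]
          show Op.conc D Lop (σ x) (α⁻¹ * σ y) = σ (Op.conc D Lop x (α⁻¹ * y))
          rw [conc_equivar hσD Lop (hFixL σ hσK) x (α⁻¹ * y), map_mul, hσα]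
        apply hinj
        rw [hB _ _ (hσsol σ hσK hσD x hx) (hσsol σ hσK hσD y hy), hQσ, ← hB _ _ hx hy]
        exact hσK _ (hCK _)
      refine ⟨Matrix.of fun i j => B (w i) (w j), fun i j => rfl, ?_, ?_, ?_⟩
      · -- determinant
        intro hdet
        obtain ⟨c, hc0, hcv⟩ := Matrix.exists_vecMul_eq_zero_iff.mpr hdet
        have hx0 : (∑ i, algebraMap ℂ E (c i) * w i) = 0 := by
          refine hndQ _ (hLspan c) fun j => ?_
          rw [← hB _ _ (hLspan c) (hw j), hBsum1 c (w j) (hw j)]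
          have := congrFun hcv j
          simp only [Matrix.vecMul, dotProduct, Matrix.of_apply,
            Pi.zero_apply] at this
          rw [this, map_zero]
        have := hindep c hx0
        exact hc0 (funext this)
      · -- transpose
        funext i j
        show Matrix.of (fun i j => B (w i) (w j)) j i
            = ((-1 : ℂ) ^ n • Matrix.of fun i j => B (w i) (w j)) i j
        rw [Matrix.smul_apply, Matrix.of_apply, Matrix.of_apply, smul_eq_mul]
        exact hsymB (w j) (w i) (hw j) (hw i)
      · -- the matrices
        intro σ hσK hσD
        have hMex : ∀ i, ∃ c : Fin (n + 1) → ℂ,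
            σ (w i) = ∑ j, algebraMap ℂ E (c j) * w j :=
          fun i => hspan _ (hσsol σ hσK hσD _ (hw i))
        choose Mc hMc using hMex
        refine ⟨Matrix.of fun j i => Mc i j, fun i => hMc i, ?_⟩
        funext i j
        have h1 : B (w i) (w j) = B (σ (w i)) (σ (w j)) :=
          (hinvB σ hσK hσD (w i) (w j) (hw i) (hw j)).symm
        rw [hMc i, hMc j] at h1
        rw [hBsum1 _ _ (hLspan _)] at h1
        have h2 : ∀ k, B (w k) (∑ l, algebraMap ℂ E (Mc j l) * w l)
            = ∑ l, Mc j l * B (w k) (w l) := fun k => hBsum2 _ _ (hw k)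
        rw [Finset.sum_congr rfl fun k _ => by rw [h2 k]] at h1
        show ((Matrix.of fun j i => Mc i j).transpose
            * Matrix.of (fun i j => B (w i) (w j)) * Matrix.of fun j i => Mc i j) i j
            = B (w i) (w j)
        have hgoal : ((Matrix.of fun j i => Mc i j).transpose
            * Matrix.of (fun i j => B (w i) (w j)) * Matrix.of fun j i => Mc i j) i j
            = ∑ l, ∑ k, Mc i k * B (w k) (w l) * Mc j l := by
          rw [Matrix.mul_apply]
          refine Finset.sum_congr rfl fun l _ => ?_
          rw [Matrix.mul_apply, Finset.sum_mul]
          refine Finset.sum_congr rfl fun k _ => ?_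
          simp [Matrix.transpose_apply, Matrix.of_apply]
        rw [hgoal, h1, Finset.sum_comm]
        refine Finset.sum_congr rfl fun k _ => ?_
        rw [Finset.mul_sum]
        refine Finset.sum_congr rfl fun l _ => ?_
        ring
end
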